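/- arXiv:2410.15088 — 2 statements merged into one kernel-verified Lean document; each statement's English description precedes it below -/
import Mathlib

section
/- Let t ≥ 2 be an integer. For every integer n ≥ 0, the total number of hooks of length 1 in all (t+1)-regular partitions of n is greater than or equal to the total number of hooks of length 1 in all t-regular partitions of n; that is, b_{t+1,1}(n) ≥ b_{t,1}(n). -/
/-- The hook length of the box in row `i`, column `j` (both 0-indexed) of the Young
diagram of the partition whose parts, listed in non-increasing order, are `l`:
1 plus the number of boxes directly to its right plus the number of boxes directly
below it. -/
def hookLength (l : List ℕ) (i j : ℕ) : ℕ :=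
  (l.getD i 0 - j) + ((Finset.Ico (i + 1) l.length).filter (fun i' => j < l.getD i' 0)).card

/-- The number of boxes with hook length exactly `k` in the Young diagram of the
partition whose multiset of parts is `μ`. -/
def hookCount (μ : Multiset ℕ) (k : ℕ) : ℕ :=
  let l := (μ.sort (· ≤ ·)).reverse
  ∑ i ∈ Finset.range l.length,
    ((Finset.range (l.getD i 0)).filter (fun j => hookLength l i j = k)).card

open Finset

lemma hook_shift (a : ℕ) (l : List ℕ) (i j : ℕ) :
    hookLength (a :: l) (i + 1) j = hookLength l i j := by
  unfold hookLength
  rw [List.getD_cons_succ, List.length_cons]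
  congr 1
  have h : Finset.Ico (i + 1 + 1) (l.length + 1) =
      (Finset.Ico (i + 1) l.length).map (addRightEmbedding 1) := by
    rw [Finset.map_add_right_Ico]
  rw [h, Finset.filter_map, Finset.card_map]
  congr 1

lemma hook_row_zero (a : ℕ) (l : List ℕ) (ha : 0 < a) (hle : ∀ x ∈ l, x ≤ a) :
    ((Finset.range a).filter (fun j => hookLength (a :: l) 0 j = 1)).card
      = if a ∈ l then 0 else 1 := by
  have hcard : ∀ j : ℕ, ((Finset.Ico 1 (l.length + 1)).filter
      (fun i' => j < (a :: l).getD i' 0)).card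
      = ((Finset.range l.length).filter (fun i => j < l.getD i 0)).card := by
    intro j
    have h : Finset.Ico 1 (l.length + 1) =
        (Finset.range l.length).map (addRightEmbedding 1) := by
      rw [Finset.range_eq_Ico, Finset.map_add_right_Ico]
    rw [h, Finset.filter_map, Finset.card_map]
    congr 1
  have hempty : ∀ j : ℕ, ((Finset.range l.length).filter (fun i => j < l.getD i 0)) = ∅
      ↔ ∀ x ∈ l, x ≤ j := by
    intro j
    rw [Finset.filter_eq_empty_iff]
    constructor
    · intro h x hx
      obtain ⟨i, hi, rfl⟩ := List.mem_iff_getElem.mp hx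
      have := h (Finset.mem_range.mpr hi)
      rw [List.getD_eq_getElem l 0 hi] at this
      omega
    · intro h i hi
      rw [Finset.mem_range] at hi
      rw [List.getD_eq_getElem l 0 hi]
      exact Nat.not_lt.mpr (h _ (List.getElem_mem hi))
  have hhook : ∀ j < a, (hookLength (a :: l) 0 j = 1 ↔ j = a - 1 ∧ ∀ x ∈ l, x ≤ j) := by
    intro j hj
    unfold hookLength
    rw [List.getD_cons_zero, List.length_cons, hcard j]
    constructor
    · intro h
      have h1 : a - j = 1 ∧ ((Finset.range l.length).filter (fun i => j < l.getD i 0)).card = 0 := by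
        omega
      refine ⟨by omega, (hempty j).mp (Finset.card_eq_zero.mp h1.2)⟩
    · rintro ⟨rfl, h2⟩
      rw [Finset.card_eq_zero.mpr ((hempty _).mpr h2)]
      omega
  by_cases hmem : a ∈ l
  · simp only [hmem, if_true]
    rw [Finset.card_eq_zero, Finset.filter_eq_empty_iff]
    intro j hj
    rw [Finset.mem_range] at hj
    rw [hhook j hj]
    rintro ⟨rfl, h2⟩
    have := h2 a hmem
    omega
  · simp only [hmem, if_false]
    have : (Finset.range a).filter (fun j => hookLength (a :: l) 0 j = 1) = {a - 1} := by
      ext j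
      simp only [Finset.mem_filter, Finset.mem_range, Finset.mem_singleton]
      constructor
      · rintro ⟨hj, h⟩; exact ((hhook j hj).mp h).1
      · rintro rfl
        refine ⟨by omega, (hhook _ (by omega)).mpr ⟨rfl, ?_⟩⟩
        intro x hx
        have h1 := hle x hx
        have h2 : x ≠ a := fun h => hmem (h ▸ hx)
        omega
    rw [this, Finset.card_singleton]

lemma sum_corner (l : List ℕ) (hs : l.Pairwise (· ≥ ·)) (hp : ∀ x ∈ l, 0 < x) :
    ∑ i ∈ Finset.range l.length,
      ((Finset.range (l.getD i 0)).filter (fun j => hookLength l i j = 1)).card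
    = l.toFinset.card := by
  induction l with
  | nil => simp
  | cons a l ih =>
    rw [List.length_cons, Finset.sum_range_succ']
    have hterm : ∀ i, ((Finset.range ((a :: l).getD (i + 1) 0)).filter
        (fun j => hookLength (a :: l) (i + 1) j = 1)).card
        = ((Finset.range (l.getD i 0)).filter (fun j => hookLength l i j = 1)).card := by
      intro i
      rw [List.getD_cons_succ]
      congr 1
      ext j
      simp [hook_shift]
    simp only [hterm]
    have hle : ∀ x ∈ l, x ≤ a := fun x hx => List.rel_of_pairwise_cons hs hx
    rw [ih hs.of_cons (fun x hx => hp x (List.mem_cons_of_mem a hx)),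
      List.getD_cons_zero, hook_row_zero a l (hp a (List.mem_cons_self (a := a) (l := l))) hle,
      List.toFinset_cons]
    by_cases hmem : a ∈ l
    · rw [Finset.insert_eq_self.mpr (List.mem_toFinset.mpr hmem)]
      simp [hmem]
    · rw [Finset.card_insert_of_notMem (fun h => hmem (List.mem_toFinset.mp h))]
      simp [hmem]

lemma hookCount_one (μ : Multiset ℕ) (hp : ∀ a ∈ μ, 0 < a) :
    hookCount μ 1 = μ.toFinset.card := by
  unfold hookCount
  have hs : ((μ.sort (· ≤ ·)).reverse).Pairwise (· ≥ ·) := by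
    rw [List.pairwise_reverse]
    exact (μ.pairwise_sort (· ≤ ·)).imp (fun h => h)
  have hmem : ∀ x ∈ (μ.sort (· ≤ ·)).reverse, x ∈ μ := by
    intro x hx
    rw [List.mem_reverse, ← Multiset.mem_coe, Multiset.sort_eq] at hx
    exact hx
  rw [sum_corner _ hs (fun x hx => hp x (hmem x hx)), List.toFinset_reverse]
  have : μ.toFinset = (Multiset.sort μ (· ≤ ·)).toFinset := by
    conv_lhs => rw [← Multiset.sort_eq μ (· ≤ ·)]
    rfl
  rw [this]

/-- largest exponent `e` with `s^e ∣ a` (for `a > 0`, `s ≥ 2`). -/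
def sv (s a : ℕ) : ℕ := Nat.findGreatest (fun k => s ^ k ∣ a) a

/-- `a` with all factors of `s` removed. -/
def sr (s a : ℕ) : ℕ := a / s ^ (sv s a)

lemma sv_dvd {s : ℕ} (a : ℕ) : s ^ sv s a ∣ a := by
  have h : (fun k => s ^ k ∣ a) 0 := by simp
  exact Nat.findGreatest_spec (P := fun k => s ^ k ∣ a) (Nat.zero_le a) h

lemma sr_mul {s : ℕ} (a : ℕ) : sr s a * s ^ sv s a = a :=
  Nat.div_mul_cancel (sv_dvd a)

lemma sr_not_dvd {s : ℕ} (hs : 2 ≤ s) {a : ℕ} (ha : 0 < a) : ¬ s ∣ sr s a := by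
  intro h
  obtain ⟨c, hc⟩ := h
  have hd : s ^ (sv s a + 1) ∣ a := by
    refine ⟨c, ?_⟩
    calc a = sr s a * s ^ sv s a := (sr_mul a).symm
    _ = s ^ (sv s a + 1) * c := by rw [hc]; ring
  have hle : s ^ (sv s a + 1) ≤ a := Nat.le_of_dvd ha hd
  have h2 : sv s a + 1 ≤ a := by
    have h1 : sv s a + 1 < 2 ^ (sv s a + 1) := Nat.lt_two_pow_self
    have h3 : 2 ^ (sv s a + 1) ≤ s ^ (sv s a + 1) := Nat.pow_le_pow_left hs _
    omega
  exact Nat.findGreatest_is_greatest (Nat.lt_succ_self _) h2 hd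

lemma factor_unique {s : ℕ} (hs : 2 ≤ s) {b e b' e' : ℕ} (hb : ¬ s ∣ b) (hb' : ¬ s ∣ b')
    (h : b * s ^ e = b' * s ^ e') : b = b' ∧ e = e' := by
  have key : ∀ {c f c' f' : ℕ}, ¬ s ∣ c → ¬ s ∣ c' → c * s ^ f = c' * s ^ f' → f ≤ f' →
      c = c' ∧ f = f' := by
    intro c f c' f' hc hc' hcf hff
    obtain ⟨d, rfl⟩ := Nat.exists_eq_add_of_le hff
    have hsf : 0 < s ^ f := Nat.pow_pos (by omega)
    have hcd : c = c' * s ^ d := by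
      have h2 : c * s ^ f = (c' * s ^ d) * s ^ f := by rw [hcf, pow_add]; ring
      exact Nat.eq_of_mul_eq_mul_right hsf h2
    rcases Nat.eq_zero_or_pos d with hd | hd
    · subst hd; simp at hcd; omega
    · exfalso
      apply hc
      rw [hcd]
      exact Dvd.dvd.mul_left (dvd_pow_self s (by omega)) c'
  rcases le_total e e' with hee | hee
  · exact key hb hb' h hee
  · obtain ⟨h1, h2⟩ := key hb' hb h.symm hee
    exact ⟨h1.symm, h2.symm⟩

lemma sv_sr_char {s : ℕ} (hs : 2 ≤ s) {b e : ℕ} (hb : ¬ s ∣ b) :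
    sr s (b * s ^ e) = b ∧ sv s (b * s ^ e) = e := by
  have hb0 : 0 < b := by
    rcases Nat.eq_zero_or_pos b with rfl | h
    · exact absurd (dvd_zero s) hb
    · exact h
  have ha : 0 < b * s ^ e := Nat.mul_pos hb0 (Nat.pow_pos (by omega))
  exact factor_unique hs (sr_not_dvd hs ha) hb (sr_mul _)

lemma digit_unique {s : ℕ} (hs : 2 ≤ s) :
    ∀ (E : ℕ) (f g : ℕ → ℕ), (∀ e, f e < s) → (∀ e, g e < s) →
      (∑ e ∈ range E, s ^ e * f e = ∑ e ∈ range E, s ^ e * g e) → ∀ e < E, f e = g e := by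
  intro E
  induction E with
  | zero => intro f g _ _ _ e he; omega
  | succ E ih =>
    intro f g hf hg hsum e he
    rw [Finset.sum_range_succ' (fun e => s ^ e * f e),
      Finset.sum_range_succ' (fun e => s ^ e * g e)] at hsum
    simp only [pow_succ, pow_zero, one_mul] at hsum
    have hrw : ∀ h : ℕ → ℕ,
        ∑ k ∈ range E, s ^ k * s * h (k + 1) = s * ∑ k ∈ range E, s ^ k * h (k + 1) := by
      intro h
      rw [Finset.mul_sum]
      apply Finset.sum_congr rfl
      intro k _
      ring
    rw [hrw f, hrw g] at hsum
    have hm : ∀ (X y : ℕ), y < s → (s * X + y) % s = y := by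
      intro X y hy
      rw [Nat.mul_add_mod, Nat.mod_eq_of_lt hy]
    have h0 : f 0 = g 0 := by
      have h1 := hm (∑ k ∈ range E, s ^ k * f (k + 1)) (f 0) (hf 0)
      have h2 := hm (∑ k ∈ range E, s ^ k * g (k + 1)) (g 0) (hg 0)
      rw [hsum, h2] at h1
      exact h1.symm
    have hrest : ∑ k ∈ range E, s ^ k * f (k + 1) = ∑ k ∈ range E, s ^ k * g (k + 1) := by
      rw [h0] at hsum
      have h2 : s * ∑ k ∈ range E, s ^ k * f (k + 1) = s * ∑ k ∈ range E, s ^ k * g (k + 1) := by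
        omega
      exact Nat.eq_of_mul_eq_mul_left (by omega) h2
    rcases e with _ | e
    · exact h0
    · exact ih (fun k => f (k + 1)) (fun k => g (k + 1)) (fun k => hf _) (fun k => hg _)
        hrest e (by omega)

lemma ofDigits_sum_range {s : ℕ} :
    ∀ (l : List ℕ) (E : ℕ), l.length ≤ E →
      ∑ e ∈ range E, s ^ e * l.getD e 0 = Nat.ofDigits s l := by
  intro l
  induction l with
  | nil => intro E _; simp [Nat.ofDigits_nil]
  | cons a l ih =>
    intro E hE
    rcases E with _ | E
    · simp at hE
    rw [Finset.sum_range_succ' (fun e => s ^ e * (a :: l).getD e 0)]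
    simp only [List.getD_cons_succ, List.getD_cons_zero, pow_zero, one_mul]
    have hrw : ∑ k ∈ range E, s ^ (k + 1) * l.getD k 0
        = s * ∑ k ∈ range E, s ^ k * l.getD k 0 := by
      rw [Finset.mul_sum]
      apply Finset.sum_congr rfl
      intro k _
      ring
    rw [hrw, ih E (by simpa using hE), Nat.ofDigits_cons]
    ring

lemma digits_getD_lt {s : ℕ} (hs : 2 ≤ s) (m e : ℕ) : (Nat.digits s m).getD e 0 < s := by
  rcases lt_or_ge e (Nat.digits s m).length with h | h
  · rw [List.getD_eq_getElem _ _ h]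
    exact Nat.digits_lt_base (by omega) (List.getElem_mem h)
  · rw [List.getD_eq_default _ _ h]
    omega

lemma digits_len_le' {s : ℕ} (hs : 2 ≤ s) {m E : ℕ} (h : m < s ^ E) :
    (Nat.digits s m).length ≤ E := by
  rcases Nat.eq_zero_or_pos m with rfl | hm
  · simp
  · rw [Nat.digits_len s m (by omega) (by omega)]
    have := (Nat.log_lt_iff_lt_pow (by omega : 1 < s) (by omega : m ≠ 0)).mpr h
    omega

lemma count_mul_le_sum (μ : Multiset ℕ) (b : ℕ) : μ.count b * b ≤ μ.sum := by
  have hle : Multiset.replicate (μ.count b) b ≤ μ := Multiset.le_iff_count.mpr (by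
    intro a
    rw [Multiset.count_replicate]
    split <;> simp_all)
  obtain ⟨u, hu⟩ := Multiset.le_iff_exists_add.mp hle
  have h1 : (Multiset.replicate (μ.count b) b).sum = μ.count b * b := by
    rw [Multiset.sum_replicate, smul_eq_mul]
  have h2 : μ.sum = (Multiset.replicate (μ.count b) b).sum + u.sum := by
    rw [← Multiset.sum_add, ← hu]
  omega

/-- The Glaisher "split" map: replace each part `a = b·s^e` (`s ∤ b`) by `s^e` copies of `b`. -/
def Gm (s : ℕ) (μ : Multiset ℕ) : Multiset ℕ :=
  μ.bind (fun a => Multiset.replicate (s ^ sv s a) (sr s a))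

lemma Gm_sum (s : ℕ) (μ : Multiset ℕ) : (Gm s μ).sum = μ.sum := by
  unfold Gm
  rw [Multiset.sum_bind]
  have h : (Multiset.map (fun a => (Multiset.replicate (s ^ sv s a) (sr s a)).sum) μ)
      = Multiset.map id μ := by
    apply Multiset.map_congr rfl
    intro a _
    rw [Multiset.sum_replicate, smul_eq_mul, mul_comm, sr_mul, id]
  rw [h, Multiset.map_id]

lemma Gm_mem {s : ℕ} (hs : 2 ≤ s) {μ : Multiset ℕ} (hpos : ∀ a ∈ μ, 0 < a) :
    ∀ b ∈ Gm s μ, 0 < b ∧ ¬ s ∣ b := by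
  intro b hb
  rw [Gm, Multiset.mem_bind] at hb
  obtain ⟨a, ha, hb⟩ := hb
  rw [Multiset.eq_of_mem_replicate hb]
  constructor
  · have h1 : s ^ sv s a ∣ a := sv_dvd a
    exact Nat.div_pos (Nat.le_of_dvd (hpos a ha) h1) (Nat.pow_pos (by omega))
  · exact sr_not_dvd hs (hpos a ha)

lemma count_Gm {s : ℕ} (hs : 2 ≤ s) {μ : Multiset ℕ} (hpos : ∀ a ∈ μ, 0 < a) {b : ℕ}
    (hb : ¬ s ∣ b) {E : ℕ} (hE : μ.sum < s ^ E) :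
    (Gm s μ).count b = ∑ e ∈ range E, s ^ e * μ.count (b * s ^ e) := by
  unfold Gm
  rw [Multiset.count_bind, Finset.sum_multiset_map_count]
  simp only [Multiset.count_replicate, smul_eq_mul]
  have hstep : ∀ a ∈ μ.toFinset, μ.count a * (if sr s a = b then s ^ sv s a else 0)
      = if sr s a = b then μ.count a * s ^ sv s a else 0 := by
    intro a _
    split <;> simp
  rw [Finset.sum_congr rfl hstep, ← Finset.sum_filter]
  rw [← Finset.sum_filter_of_ne (s := range E) (p := fun e => b * s ^ e ∈ μ)
    (f := fun e => s ^ e * μ.count (b * s ^ e)) (by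
      intro e _ hne
      by_contra hmem
      exact hne (by simp [Multiset.count_eq_zero.mpr hmem]))]
  apply Finset.sum_nbij' (i := fun a => sv s a) (j := fun e => b * s ^ e)
  · intro a ha
    rw [Finset.mem_filter, Multiset.mem_toFinset] at ha
    obtain ⟨haf, hsr⟩ := ha
    have ha0 : 0 < a := hpos a haf
    have heq : b * s ^ sv s a = a := by rw [← hsr]; exact sr_mul a
    rw [Finset.mem_filter, Finset.mem_range]
    constructor
    · have h1 : s ^ sv s a ≤ a := Nat.le_of_dvd ha0 (sv_dvd a)
      have h2 : a ≤ μ.sum := Multiset.le_sum_of_mem haf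
      have h3 : s ^ sv s a < s ^ E := by omega
      exact (Nat.pow_lt_pow_iff_right (by omega)).mp h3
    · rw [heq]; exact haf
  · intro e he
    rw [Finset.mem_filter] at he
    obtain ⟨_, hmem⟩ := he
    rw [Finset.mem_filter, Multiset.mem_toFinset]
    exact ⟨hmem, (sv_sr_char hs hb).1⟩
  · intro a ha
    rw [Finset.mem_filter] at ha
    obtain ⟨_, hsr⟩ := ha
    rw [← hsr]
    exact sr_mul a
  · intro e _
    exact (sv_sr_char hs hb).2
  · intro a ha
    rw [Finset.mem_filter, Multiset.mem_toFinset] at ha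
    obtain ⟨haf, hsr⟩ := ha
    have heq : b * s ^ sv s a = a := by rw [← hsr]; exact sr_mul a
    rw [heq, mul_comm]

lemma count_Gm_zero {s : ℕ} (hs : 2 ≤ s) {μ : Multiset ℕ} (hpos : ∀ a ∈ μ, 0 < a) {b : ℕ}
    (hb : s ∣ b) : (Gm s μ).count b = 0 := by
  rw [Multiset.count_eq_zero]
  intro hmem
  exact (Gm_mem hs hpos b hmem).2 hb

lemma Gm_inj {s : ℕ} (hs : 2 ≤ s) {μ ν : Multiset ℕ} (hposμ : ∀ a ∈ μ, 0 < a)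
    (hposν : ∀ a ∈ ν, 0 < a) (hμ : ∀ a, μ.count a < s) (hν : ∀ a, ν.count a < s)
    (h : Gm s μ = Gm s ν) : μ = ν := by
  ext a
  rcases Nat.eq_zero_or_pos a with rfl | ha
  · rw [Multiset.count_eq_zero.mpr (fun hm => by simpa using hposμ 0 hm),
      Multiset.count_eq_zero.mpr (fun hm => by simpa using hposν 0 hm)]
  set E := μ.sum + ν.sum + 1 with hEdef
  have hE : μ.sum < s ^ E ∧ ν.sum < s ^ E := by
    have h1 : E < 2 ^ E := Nat.lt_two_pow_self
    have h2 : 2 ^ E ≤ s ^ E := Nat.pow_le_pow_left hs _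
    omega
  set b := sr s a with hbdef
  set e := sv s a with hedef
  have hab : b * s ^ e = a := sr_mul a
  have hsb : ¬ s ∣ b := sr_not_dvd hs ha
  rcases lt_or_ge e E with heE | heE
  · have hcount := count_Gm hs hposμ hsb hE.1
    have hcount' := count_Gm hs hposν hsb hE.2
    rw [h, hcount'] at hcount
    have hdu : ν.count (b * s ^ e) = μ.count (b * s ^ e) :=
      digit_unique hs E (fun e => ν.count (b * s ^ e)) (fun e => μ.count (b * s ^ e))
        (fun _ => hν _) (fun _ => hμ _) hcount e heE
    rw [hab] at hdu
    omega
  · have key : ∀ (ρ : Multiset ℕ), ρ.sum < s ^ E → ρ.count a = 0 := by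
      intro ρ hρ
      rw [Multiset.count_eq_zero]
      intro hmem
      have h1 : a ≤ ρ.sum := Multiset.le_sum_of_mem hmem
      have hb0 : 0 < b := by
        rcases Nat.eq_zero_or_pos b with h' | h'
        · exfalso; apply hsb; rw [h']; exact dvd_zero s
        · exact h'
      have h2 : s ^ e ≤ b * s ^ e := by
        calc s ^ e = 1 * s ^ e := (one_mul _).symm
        _ ≤ b * s ^ e := Nat.mul_le_mul_right _ hb0
      have h3 : s ^ E ≤ s ^ e := Nat.pow_le_pow_right (by omega) heE
      omega
    rw [key μ hE.1, key ν hE.2]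

/-- Glaisher "merge" map: base-`s` digits of multiplicities. -/
def Fm (s E : ℕ) (ρ : Multiset ℕ) : Multiset ℕ :=
  ∑ b ∈ ρ.toFinset, ∑ e ∈ range E,
    Multiset.replicate ((Nat.digits s (ρ.count b)).getD e 0) (b * s ^ e)

lemma Fm_pos {s E : ℕ} {ρ : Multiset ℕ} (hpos : ∀ b ∈ ρ, 0 < b) (hs : 2 ≤ s) :
    ∀ x ∈ Fm s E ρ, 0 < x := by
  intro x hx
  rw [Fm] at hx
  rw [Multiset.mem_sum] at hx
  obtain ⟨b, hb, hx⟩ := hx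
  rw [Multiset.mem_sum] at hx
  obtain ⟨e, _, hx⟩ := hx
  rw [Multiset.eq_of_mem_replicate hx]
  have hb0 : 0 < b := hpos b (Multiset.mem_toFinset.mp hb)
  exact Nat.mul_pos hb0 (Nat.pow_pos (by omega))

lemma count_Fm {s E : ℕ} (hs : 2 ≤ s) {ρ : Multiset ℕ} (hreg : ∀ b ∈ ρ, ¬ s ∣ b)
    {a : ℕ} (ha : 0 < a) :
    (Fm s E ρ).count a
      = if sv s a < E then (Nat.digits s (ρ.count (sr s a))).getD (sv s a) 0 else 0 := by
  rw [Fm, Multiset.count_sum']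
  have hinner : ∀ b ∈ ρ.toFinset,
      (∑ e ∈ range E, Multiset.replicate ((Nat.digits s (ρ.count b)).getD e 0) (b * s ^ e)).count a
      = ∑ e ∈ range E, if b * s ^ e = a then (Nat.digits s (ρ.count b)).getD e 0 else 0 := by
    intro b _
    rw [Multiset.count_sum']
    apply Finset.sum_congr rfl
    intro e _
    rw [Multiset.count_replicate]
  rw [Finset.sum_congr rfl hinner]
  have hcond : ∀ b ∈ ρ.toFinset, ∀ e ∈ range E,
      (b * s ^ e = a) ↔ (b = sr s a ∧ e = sv s a) := by
    intro b hb e _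
    constructor
    · intro h
      have hbnd : ¬ s ∣ b := hreg b (Multiset.mem_toFinset.mp hb)
      have h1 := sv_sr_char hs hbnd (e := e)
      rw [h] at h1
      exact ⟨h1.1.symm, h1.2.symm⟩
    · rintro ⟨rfl, rfl⟩
      exact sr_mul a
  have hrw : ∀ b ∈ ρ.toFinset,
      (∑ e ∈ range E, if b * s ^ e = a then (Nat.digits s (ρ.count b)).getD e 0 else 0)
      = ∑ e ∈ range E, if b = sr s a ∧ e = sv s a then (Nat.digits s (ρ.count b)).getD e 0 else 0 := by
    intro b hb
    apply Finset.sum_congr rfl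
    intro e he
    rw [if_congr (hcond b hb e he) rfl rfl]
  rw [Finset.sum_congr rfl hrw]
  by_cases hsv : sv s a < E
  · simp only [hsv, if_true]
    by_cases hmem : sr s a ∈ ρ.toFinset
    · rw [Finset.sum_eq_single_of_mem (sr s a) hmem]
      · rw [Finset.sum_eq_single_of_mem (sv s a) (Finset.mem_range.mpr hsv)]
        · simp
        · intro e _ hne
          simp [hne]
      · intro b _ hne
        apply Finset.sum_eq_zero
        intro e _
        simp [hne]
    · have hcnt : ρ.count (sr s a) = 0 :=
        Multiset.count_eq_zero.mpr (fun h => hmem (Multiset.mem_toFinset.mpr h))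
      rw [hcnt]
      simp only [Nat.digits_zero, List.getD_nil]
      apply Finset.sum_eq_zero
      intro b hb
      apply Finset.sum_eq_zero
      intro e _
      have : b ≠ sr s a := fun h => hmem (h ▸ hb)
      simp [this]
  · simp only [hsv, if_false]
    apply Finset.sum_eq_zero
    intro b _
    apply Finset.sum_eq_zero
    intro e he
    rw [Finset.mem_range] at he
    have : ¬ (b = sr s a ∧ e = sv s a) := by
      rintro ⟨_, rfl⟩
      omega
    simp [this]

lemma Fm_count_lt {s E : ℕ} (hs : 2 ≤ s) {ρ : Multiset ℕ} (hreg : ∀ b ∈ ρ, ¬ s ∣ b)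
    (hpos : ∀ b ∈ ρ, 0 < b) : ∀ a, (Fm s E ρ).count a < s := by
  intro a
  rcases Nat.eq_zero_or_pos a with rfl | ha
  · rw [Multiset.count_eq_zero.mpr (fun h => by simpa using Fm_pos hpos hs 0 h)]
    omega
  rw [count_Fm hs hreg ha]
  split
  · exact digits_getD_lt hs _ _
  · omega

lemma Fm_sum {s E : ℕ} (hs : 2 ≤ s) {ρ : Multiset ℕ} (hpos : ∀ b ∈ ρ, 0 < b)
    (hE : ρ.sum < s ^ E) :
    (Fm s E ρ).sum = ρ.sum := by
  rw [Fm]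
  rw [show (∑ b ∈ ρ.toFinset, ∑ e ∈ range E,
      Multiset.replicate ((Nat.digits s (ρ.count b)).getD e 0) (b * s ^ e)).sum
    = Multiset.sumAddMonoidHom (∑ b ∈ ρ.toFinset, ∑ e ∈ range E,
      Multiset.replicate ((Nat.digits s (ρ.count b)).getD e 0) (b * s ^ e)) from rfl]
  rw [map_sum Multiset.sumAddMonoidHom _ ρ.toFinset]
  have hstep : ∀ b ∈ ρ.toFinset,
      (Multiset.sumAddMonoidHom (∑ e ∈ range E,
        Multiset.replicate ((Nat.digits s (ρ.count b)).getD e 0) (b * s ^ e)))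
      = ρ.count b * b := by
    intro b hb
    rw [map_sum Multiset.sumAddMonoidHom _ (range E)]
    have h1 : ∀ e ∈ range E,
        Multiset.sumAddMonoidHom (Multiset.replicate ((Nat.digits s (ρ.count b)).getD e 0) (b * s ^ e))
        = b * (s ^ e * (Nat.digits s (ρ.count b)).getD e 0) := by
      intro e _
      have : Multiset.sumAddMonoidHom (Multiset.replicate ((Nat.digits s (ρ.count b)).getD e 0) (b * s ^ e))
          = (Multiset.replicate ((Nat.digits s (ρ.count b)).getD e 0) (b * s ^ e)).sum := rfl
      rw [this, Multiset.sum_replicate, smul_eq_mul]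
      ring
    rw [Finset.sum_congr rfl h1, ← Finset.mul_sum]
    have hlen : (Nat.digits s (ρ.count b)).length ≤ E := by
      apply digits_len_le' hs
      have h2 : ρ.count b * b ≤ ρ.sum := count_mul_le_sum ρ b
      have hb0 : 0 < b := hpos b (Multiset.mem_toFinset.mp hb)
      calc ρ.count b ≤ ρ.count b * b := Nat.le_mul_of_pos_right _ hb0
      _ ≤ ρ.sum := h2
      _ < s ^ E := hE
    rw [ofDigits_sum_range _ E hlen, Nat.ofDigits_digits]
    ring
  rw [Finset.sum_congr rfl hstep]
  have hfin : (Multiset.map id ρ).sum = ∑ m ∈ ρ.toFinset, ρ.count m • id m :=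
    Finset.sum_multiset_map_count ρ id
  rw [Multiset.map_id] at hfin
  rw [hfin]
  apply Finset.sum_congr rfl
  intro b _
  simp [smul_eq_mul]

lemma Gm_Fm {s E : ℕ} (hs : 2 ≤ s) {ρ : Multiset ℕ} (hpos : ∀ b ∈ ρ, 0 < b)
    (hreg : ∀ b ∈ ρ, ¬ s ∣ b) (hE : ρ.sum < s ^ E) : Gm s (Fm s E ρ) = ρ := by
  have hFpos := Fm_pos (s := s) (E := E) hpos hs
  ext a
  rcases Nat.eq_zero_or_pos a with rfl | ha
  · rw [Multiset.count_eq_zero.mpr (fun hm => by simpa using (Gm_mem hs hFpos 0 hm).1),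
      Multiset.count_eq_zero.mpr (fun hm => by simpa using hpos 0 hm)]
  by_cases hdvd : s ∣ a
  · rw [count_Gm_zero hs hFpos hdvd,
      Multiset.count_eq_zero.mpr (fun hm => hreg a hm hdvd)]
  · have hFE : (Fm s E ρ).sum < s ^ E := by rw [Fm_sum hs hpos hE]; exact hE
    rw [count_Gm hs hFpos hdvd hFE]
    have hchar := sv_sr_char hs (b := a) (e := 0) hdvd
    simp only [pow_zero, mul_one] at hchar
    have hterm : ∀ e ∈ range E, s ^ e * (Fm s E ρ).count (a * s ^ e)
        = s ^ e * (Nat.digits s (ρ.count a)).getD e 0 := by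
      intro e he
      rw [Finset.mem_range] at he
      have hpos' : 0 < a * s ^ e := Nat.mul_pos ha (Nat.pow_pos (by omega))
      rw [count_Fm hs hreg hpos']
      have hc := sv_sr_char hs (b := a) (e := e) hdvd
      rw [hc.1, hc.2, if_pos he]
    rw [Finset.sum_congr rfl hterm]
    have hlen : (Nat.digits s (ρ.count a)).length ≤ E := by
      apply digits_len_le' hs
      calc ρ.count a ≤ ρ.count a * a := Nat.le_mul_of_pos_right _ ha
      _ ≤ ρ.sum := count_mul_le_sum ρ a
      _ < s ^ E := hE
    rw [ofDigits_sum_range _ E hlen, Nat.ofDigits_digits]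

/-- Glaisher's theorem: `s`-regular partitions of `m` are equinumerous with partitions of `m`
in which every part has multiplicity `< s`. -/
lemma glaisher {s : ℕ} (hs : 2 ≤ s) (m : ℕ) :
    (Finset.univ.filter (fun p : m.Partition => ∀ a ∈ p.parts, ¬ s ∣ a)).card
    = (Finset.univ.filter (fun p : m.Partition => ∀ a ∈ p.parts, p.parts.count a < s)).card := by
  symm
  apply Finset.card_bij (i := fun q _ => (⟨Gm s q.parts,
    fun {a} ha => (Gm_mem hs (fun _ h => q.parts_pos h) a ha).1,
    by rw [Gm_sum]; exact q.parts_sum⟩ : m.Partition))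
  · intro q hq
    rw [Finset.mem_filter]
    exact ⟨Finset.mem_univ _, fun a ha => (Gm_mem hs (fun _ h => q.parts_pos h) a ha).2⟩
  · intro q₁ hq₁ q₂ hq₂ h
    rw [Finset.mem_filter] at hq₁ hq₂
    have hcount : ∀ (q : m.Partition), (∀ a ∈ q.parts, q.parts.count a < s) →
        ∀ a, q.parts.count a < s := by
      intro q hq a
      by_cases hm' : a ∈ q.parts
      · exact hq a hm'
      · rw [Multiset.count_eq_zero.mpr hm']; omega
    have h' : Gm s q₁.parts = Gm s q₂.parts := congrArg Nat.Partition.parts h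
    exact Nat.Partition.ext (Gm_inj hs (fun _ h => q₁.parts_pos h) (fun _ h => q₂.parts_pos h)
      (hcount q₁ hq₁.2) (hcount q₂ hq₂.2) h')
  · intro p hp
    rw [Finset.mem_filter] at hp
    have hE : p.parts.sum < s ^ (m + 1) := by
      rw [p.parts_sum]
      have h1 : m < 2 ^ (m + 1) := by
        have := Nat.lt_two_pow_self (n := m)
        have : (2:ℕ) ^ m ≤ 2 ^ (m + 1) := Nat.pow_le_pow_right (by omega) (by omega)
        omega
      have h2 : (2:ℕ) ^ (m + 1) ≤ s ^ (m + 1) := Nat.pow_le_pow_left hs _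
      omega
    refine ⟨⟨Fm s (m + 1) p.parts, fun {a} ha => Fm_pos (fun _ h => p.parts_pos h) hs a ha,
      by rw [Fm_sum hs (fun _ h => p.parts_pos h) hE]; exact p.parts_sum⟩, ?_, ?_⟩
    · rw [Finset.mem_filter]
      refine ⟨Finset.mem_univ _, fun a ha => Fm_count_lt hs hp.2 (fun _ h => p.parts_pos h) a⟩
    · exact Nat.Partition.ext (Gm_Fm hs (fun _ h => p.parts_pos h) hp.2 hE)

/-- number of `t`-regular partitions of `m` -/
def regCard (t m : ℕ) : ℕ :=
  (Finset.univ.filter (fun p : m.Partition => ∀ a ∈ p.parts, ¬ t ∣ a)).card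

lemma regCard_mono (t : ℕ) (ht : 2 ≤ t) : Monotone (regCard t) := by
  apply monotone_nat_of_le_succ
  intro m
  apply Finset.card_le_card_of_injOn
    (f := fun p => ⟨1 ::ₘ p.parts,
      fun {a} ha => by
        rcases Multiset.mem_cons.mp ha with rfl | h
        · omega
        · exact p.parts_pos h,
      by rw [Multiset.sum_cons, p.parts_sum]; omega⟩)
  · intro p hp
    rw [Finset.mem_coe, Finset.mem_filter] at hp ⊢
    refine ⟨Finset.mem_univ _, ?_⟩
    intro a ha
    rcases Multiset.mem_cons.mp ha with rfl | h
    · intro hd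
      have := Nat.le_of_dvd (by omega) hd
      omega
    · exact hp.2 a h
  · intro p _ q _ h
    have h' : (1 : ℕ) ::ₘ p.parts = 1 ::ₘ q.parts := congrArg Nat.Partition.parts h
    exact Nat.Partition.ext ((Multiset.cons_inj_right 1).mp h')

lemma distinct_parts_sum (t n : ℕ) (ht : 2 ≤ t) :
    ∑ p ∈ Finset.univ.filter (fun p : n.Partition => ∀ a ∈ p.parts, ¬ t ∣ a),
      p.parts.toFinset.card
    = ∑ j ∈ (Finset.Icc 1 n).filter (fun j => ¬ t ∣ j), regCard t (n - j) := by
  have hsubset : ∀ p : n.Partition, ∀ j ∈ p.parts.toFinset, j ∈ Finset.Icc 1 n := by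
    intro p j hj
    rw [Multiset.mem_toFinset] at hj
    rw [Finset.mem_Icc]
    exact ⟨p.parts_pos hj, by
      have := Multiset.le_sum_of_mem hj
      rw [p.parts_sum] at this
      exact this⟩
  have hcard : ∀ p : n.Partition, p.parts.toFinset.card
      = ∑ j ∈ Finset.Icc 1 n, if j ∈ p.parts then 1 else 0 := by
    intro p
    rw [← Finset.card_filter]
    congr 1
    ext j
    simp only [Finset.mem_filter, Multiset.mem_toFinset]
    constructor
    · intro h
      exact ⟨hsubset p j (Multiset.mem_toFinset.mpr h), h⟩
    · intro h; exact h.2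
  rw [Finset.sum_congr rfl (fun p _ => hcard p), Finset.sum_comm]
  have hterm : ∀ j ∈ Finset.Icc 1 n,
      (∑ p ∈ Finset.univ.filter (fun p : n.Partition => ∀ a ∈ p.parts, ¬ t ∣ a),
        if j ∈ p.parts then 1 else 0)
      = ((Finset.univ.filter (fun p : n.Partition => ∀ a ∈ p.parts, ¬ t ∣ a)).filter
          (fun p => j ∈ p.parts)).card := by
    intro j _
    rw [Finset.card_filter]
  rw [Finset.sum_congr rfl hterm]
  rw [← Finset.sum_filter_of_ne (p := fun j => ¬ t ∣ j) (by
    intro j hj hne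
    by_contra hdvd
    -- hdvd : t ∣ j directly
    apply hne
    rw [Finset.card_eq_zero, Finset.filter_eq_empty_iff]
    intro p hp
    rw [Finset.mem_filter] at hp
    intro hmem
    exact hp.2 j hmem hdvd)]
  apply Finset.sum_congr rfl
  intro j hj
  rw [Finset.mem_filter, Finset.mem_Icc] at hj
  obtain ⟨⟨hj1, hjn⟩, hjt⟩ := hj
  rw [regCard]
  apply Finset.card_bij (i := fun p hp => (⟨p.parts.erase j,
    fun {a} ha => p.parts_pos (Multiset.mem_of_mem_erase ha),
    by
      have hp' : j ∈ p.parts := (Finset.mem_filter.mp hp).2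
      have h1 : j + (p.parts.erase j).sum = p.parts.sum := by
        rw [← Multiset.sum_cons, Multiset.cons_erase hp']
      rw [p.parts_sum] at h1
      omega⟩ : (n - j).Partition))
  · intro p hp
    rw [Finset.mem_filter] at hp ⊢
    obtain ⟨hp1, hp2⟩ := hp
    rw [Finset.mem_filter] at hp1
    exact ⟨Finset.mem_univ _, fun a ha => hp1.2 a (Multiset.mem_of_mem_erase ha)⟩
  · intro p hp q hq h
    have hjp : j ∈ p.parts := (Finset.mem_filter.mp hp).2
    have hjq : j ∈ q.parts := (Finset.mem_filter.mp hq).2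
    have h' : p.parts.erase j = q.parts.erase j := congrArg Nat.Partition.parts h
    apply Nat.Partition.ext
    rw [← Multiset.cons_erase hjp, ← Multiset.cons_erase hjq, h']
  · intro q hq
    rw [Finset.mem_filter] at hq
    refine ⟨⟨j ::ₘ q.parts,
      fun {a} ha => by
        rcases Multiset.mem_cons.mp ha with rfl | h
        · omega
        · exact q.parts_pos h,
      by rw [Multiset.sum_cons, q.parts_sum]; omega⟩, ?_, ?_⟩
    · rw [Finset.mem_filter, Finset.mem_filter]
      refine ⟨⟨Finset.mem_univ _, ?_⟩, Multiset.mem_cons_self j _⟩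
      intro a ha
      rcases Multiset.mem_cons.mp ha with rfl | h
      · exact hjt
      · exact hq.2 a h
    · apply Nat.Partition.ext
      simp [Multiset.erase_cons_head]

lemma sum_shift (Q : ℕ → ℕ) (hQ : Monotone Q) (t n : ℕ) (ht : 1 ≤ t) :
    ∑ j ∈ (Icc 1 n).filter (fun j => ¬ t ∣ j), Q (n - j)
    ≤ ∑ j ∈ (Icc 1 n).filter (fun j => ¬ (t + 1) ∣ j), Q (n - j) := by
  have hsplit : ∀ s : ℕ,
      ∑ j ∈ (Icc 1 n).filter (fun j => ¬ s ∣ j), Q (n - j)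
      + ∑ j ∈ (Icc 1 n).filter (fun j => s ∣ j), Q (n - j)
      = ∑ j ∈ Icc 1 n, Q (n - j) := by
    intro s
    rw [add_comm]
    exact Finset.sum_filter_add_sum_filter_not (Icc 1 n) (fun j => s ∣ j) _
  have hkey : ∑ j ∈ (Icc 1 n).filter (fun j => (t + 1) ∣ j), Q (n - j)
      ≤ ∑ j ∈ (Icc 1 n).filter (fun j => t ∣ j), Q (n - j) := by
    set ψ : ℕ → ℕ := fun j => t * (j / (t + 1)) with hψ
    have hmem : ∀ j ∈ (Icc 1 n).filter (fun j => (t + 1) ∣ j), ψ j ≤ j ∧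
        ψ j ∈ (Icc 1 n).filter (fun j => t ∣ j) := by
      intro j hj
      rw [Finset.mem_filter, Finset.mem_Icc] at hj
      obtain ⟨⟨hj1, hjn⟩, hdvd⟩ := hj
      have hjdiv : (t + 1) * (j / (t + 1)) = j := Nat.mul_div_cancel' hdvd
      have hk1 : 1 ≤ j / (t + 1) := by
        rcases Nat.eq_zero_or_pos (j / (t + 1)) with h | h
        · rw [h, mul_zero] at hjdiv; omega
        · exact h
      have hle : ψ j ≤ j := by
        have h1 : t * (j / (t + 1)) ≤ (t + 1) * (j / (t + 1)) :=
          Nat.mul_le_mul_right _ (by omega)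
        rw [hjdiv] at h1
        exact h1
      refine ⟨hle, ?_⟩
      rw [Finset.mem_filter, Finset.mem_Icc]
      have hψ1 : 1 ≤ ψ j := Nat.mul_pos (by omega) hk1
      exact ⟨⟨hψ1, le_trans hle hjn⟩, ⟨j / (t + 1), rfl⟩⟩
    have hinj : ∀ x ∈ (Icc 1 n).filter (fun j => (t + 1) ∣ j),
        ∀ y ∈ (Icc 1 n).filter (fun j => (t + 1) ∣ j), ψ x = ψ y → x = y := by
      intro x hx y hy h
      rw [Finset.mem_filter] at hx hy
      have hx' : (t + 1) * (x / (t + 1)) = x := Nat.mul_div_cancel' hx.2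
      have hy' : (t + 1) * (y / (t + 1)) = y := Nat.mul_div_cancel' hy.2
      have heq : x / (t + 1) = y / (t + 1) := Nat.eq_of_mul_eq_mul_left (by omega) h
      rw [← hx', heq, hy']
    calc ∑ j ∈ (Icc 1 n).filter (fun j => (t + 1) ∣ j), Q (n - j)
        ≤ ∑ j ∈ (Icc 1 n).filter (fun j => (t + 1) ∣ j), Q (n - ψ j) := by
          apply Finset.sum_le_sum
          intro j hj
          exact hQ (by have := (hmem j hj).1; omega)
      _ = ∑ x ∈ ((Icc 1 n).filter (fun j => (t + 1) ∣ j)).image ψ, Q (n - x) :=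
          (Finset.sum_image (f := fun x => Q (n - x)) hinj).symm
      _ ≤ ∑ j ∈ (Icc 1 n).filter (fun j => t ∣ j), Q (n - j) := by
          apply Finset.sum_le_sum_of_subset
          intro x hx
          rw [Finset.mem_image] at hx
          obtain ⟨j, hj, rfl⟩ := hx
          exact (hmem j hj).2
  have h1 := hsplit t
  have h2 := hsplit (t + 1)
  omega


/-- `b t k n`: the total number of boxes with hook length exactly `k`, summed over the
Young diagrams of all `t`-regular partitions of `n` (partitions of `n` none of whose
parts is divisible by `t`). -/
def regularPartitionHookCount (t k n : ℕ) : ℕ :=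
  ∑ p ∈ Finset.univ.filter (fun p : n.Partition => ∀ a ∈ p.parts, ¬ t ∣ a),
    hookCount p.parts k


lemma regCard_le_succ (t m : ℕ) (ht : 2 ≤ t) : regCard t m ≤ regCard (t + 1) m := by
  rw [regCard, regCard, glaisher ht m, glaisher (by omega : 2 ≤ t + 1) m]
  apply Finset.card_le_card
  intro p hp
  rw [Finset.mem_filter] at hp ⊢
  exact ⟨hp.1, fun a ha => by have := hp.2 a ha; omega⟩

/-- For every integer `t ≥ 2` and every `n ≥ 0`, the total number of hooks of length 1
in all `(t+1)`-regular partitions of `n` is at least the total number of hooks of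
length 1 in all `t`-regular partitions of `n`: `b_{t+1,1}(n) ≥ b_{t,1}(n)`. -/
theorem hook_length_one_bias (t : ℕ) (ht : 2 ≤ t) (n : ℕ) :
    regularPartitionHookCount t 1 n ≤ regularPartitionHookCount (t + 1) 1 n := by
  have hrw : ∀ s : ℕ, 2 ≤ s → regularPartitionHookCount s 1 n
      = ∑ j ∈ (Finset.Icc 1 n).filter (fun j => ¬ s ∣ j), regCard s (n - j) := by
    intro s hs
    rw [regularPartitionHookCount, ← distinct_parts_sum s n hs]
    apply Finset.sum_congr rfl
    intro p _
    exact hookCount_one p.parts (fun a ha => p.parts_pos ha)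
  rw [hrw t ht, hrw (t + 1) (by omega)]
  calc ∑ j ∈ (Finset.Icc 1 n).filter (fun j => ¬ t ∣ j), regCard t (n - j)
      ≤ ∑ j ∈ (Finset.Icc 1 n).filter (fun j => ¬ t ∣ j), regCard (t + 1) (n - j) :=
        Finset.sum_le_sum (fun j _ => regCard_le_succ t _ ht)
    _ ≤ ∑ j ∈ (Finset.Icc 1 n).filter (fun j => ¬ (t + 1) ∣ j), regCard (t + 1) (n - j) :=
        sum_shift (regCard (t + 1)) (regCard_mono (t + 1) (by omega)) t n (by omega)
end

section
/- Let t ≥ 2 be an integer. For every integer n ≥ 0, the number of (t+1)-regular partitions of n is greater than or equal to the number of t-regular partitions of n; that is, b_{t+1}(n) ≥ b_t(n). -/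
/-- `b t n`: the number of `t`-regular partitions of `n`, i.e. partitions of `n` none
of whose parts is divisible by `t` (with `b t 0 = 1`, counting the empty partition). -/
def regularPartitionCount (t n : ℕ) : ℕ :=
  (Finset.univ.filter (fun p : n.Partition => ∀ a ∈ p.parts, ¬ t ∣ a)).card

section Aux
open Finset

namespace RegAux

/-- largest power of `t` dividing `a` -/
def vv (t a : ℕ) : ℕ := t.maxPowDiv a
/-- the `t`-free part of `a` -/
def core (t a : ℕ) : ℕ := a / t ^ vv t a

lemma core_mul (t a : ℕ) : t ^ vv t a * core t a = a :=
  Nat.mul_div_cancel' (Nat.maxPowDiv.pow_dvd (p := t) (n := a))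

lemma not_dvd_core {t a : ℕ} (ht : 2 ≤ t) (ha : a ≠ 0) : ¬ t ∣ core t a := by
  rintro ⟨c, hc⟩
  have hdvd : t ^ (vv t a + 1) ∣ a := by
    refine ⟨c, ?_⟩
    conv_lhs => rw [← core_mul t a, hc]
    ring
  have := (Nat.pow_dvd_iff_le_padicValNat (p := t) (by omega) ha).mp hdvd
  have : vv t a + 1 ≤ vv t a := this
  omega

lemma vv_pow_mul {t m : ℕ} (ht : 2 ≤ t) (hm : ¬ t ∣ m) (v : ℕ) : vv t (t ^ v * m) = v := by
  have hm0 : 0 < m := Nat.pos_of_ne_zero (by rintro rfl; exact hm (dvd_zero t))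
  have h0 : vv t m = 0 := by
    by_contra h
    exact hm (dvd_trans (dvd_pow_self t h) (Nat.maxPowDiv.pow_dvd (p := t) (n := m)))
  have := Nat.maxPowDiv.base_pow_mul (p := t) (n := m) (k := v) (by omega) (by omega)
  show padicValNat t (t ^ v * m) = v
  rw [this, show padicValNat t m = 0 from h0, Nat.zero_add]

lemma core_pow_mul {t m : ℕ} (ht : 2 ≤ t) (hm : ¬ t ∣ m) (v : ℕ) : core t (t ^ v * m) = m := by
  rw [core, vv_pow_mul ht hm, Nat.mul_div_cancel_left _ (Nat.pow_pos (by omega) : 0 < t ^ v)]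

lemma pow_mul_eq_iff {t m a : ℕ} (ht : 2 ≤ t) (hm : ¬ t ∣ m) (v : ℕ) :
    t ^ v * m = a ↔ v = vv t a ∧ m = core t a := by
  constructor
  · rintro rfl
    exact ⟨(vv_pow_mul ht hm v).symm, (core_pow_mul ht hm v).symm⟩
  · rintro ⟨rfl, rfl⟩
    exact core_mul t a

/-- weight of a multiplicity function -/
def wt (f : ℕ →₀ ℕ) : ℕ := f.sum fun a c => a * c

/-- Glaisher "combining" map as an additive hom. -/
noncomputable def combineHom (t : ℕ) : (ℕ →₀ ℕ) →+ (ℕ →₀ ℕ) :=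
  Finsupp.liftAddHom fun a => (Finsupp.singleAddHom (core t a)).comp (AddMonoidHom.mulRight (t ^ vv t a))

lemma combineHom_apply (t : ℕ) (g : ℕ →₀ ℕ) :
    combineHom t g = g.sum fun a c => Finsupp.single (core t a) (c * t ^ vv t a) := by
  rw [combineHom, Finsupp.liftAddHom_apply]; rfl

lemma combineHom_single (t a c : ℕ) :
    combineHom t (Finsupp.single a c) = Finsupp.single (core t a) (c * t ^ vv t a) := by
  rw [combineHom_apply]
  exact Finsupp.sum_single_index (by simp)

lemma wt_combine (t : ℕ) (g : ℕ →₀ ℕ) : wt (combineHom t g) = wt g := by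
  rw [combineHom_apply, wt, Finsupp.sum_sum_index (fun a => by simp) (fun a b c => by ring)]
  refine Finsupp.sum_congr fun a ha => ?_
  rw [Finsupp.sum_single_index (by simp)]
  rw [mul_comm (g a), ← mul_assoc, mul_comm (core t a), core_mul t a]

lemma support_combine_regular {t : ℕ} (ht : 2 ≤ t) {g : ℕ →₀ ℕ} (hg : g 0 = 0) :
    ∀ m ∈ (combineHom t g).support, ¬ t ∣ m := by
  intro m hm
  rw [combineHom_apply] at hm
  have := Finsupp.support_sum hm
  rw [Finset.mem_biUnion] at this
  obtain ⟨a, ha, hmem⟩ := this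
  have := Finsupp.support_single_subset hmem
  simp only [Finset.mem_singleton] at this
  subst this
  have ha0 : a ≠ 0 := by rintro rfl; exact (Finsupp.mem_support_iff.mp ha) hg
  exact not_dvd_core ht ha0


lemma sum_getD_eq_ofDigits (b : ℕ) (L : List ℕ) :
    ∑ v ∈ Finset.range L.length, L.getD v 0 * b ^ v = Nat.ofDigits b L := by
  induction L with
  | nil => simp [Nat.ofDigits]
  | cons d L ih =>
    rw [List.length_cons, Finset.sum_range_succ']
    simp only [List.getD_cons_succ, List.getD_cons_zero, pow_zero, mul_one, pow_succ]
    rw [Nat.ofDigits_cons]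
    have : ∑ v ∈ Finset.range L.length, L.getD v 0 * (b ^ v * b)
        = (∑ v ∈ Finset.range L.length, L.getD v 0 * b ^ v) * b := by
      rw [Finset.sum_mul]; exact Finset.sum_congr rfl fun v _ => by ring
    rw [this, ih]
    ring

lemma getD_digits_lt {t : ℕ} (ht : 2 ≤ t) (c v : ℕ) : (Nat.digits t c).getD v 0 < t := by
  by_cases h : v < (Nat.digits t c).length
  · rw [List.getD_eq_getElem _ _ h]
    exact Nat.digits_lt_base (by omega) (List.getElem_mem h)
  · rw [List.getD_eq_default _ _ (by omega)]; omega

/-- Glaisher "expanding" map. -/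
noncomputable def expandF (t : ℕ) (f : ℕ →₀ ℕ) : ℕ →₀ ℕ :=
  f.sum fun m c => ∑ v ∈ Finset.range (Nat.digits t c).length,
    Finsupp.single (t ^ v * m) ((Nat.digits t c).getD v 0)

lemma combine_expand {t : ℕ} (ht : 2 ≤ t) {f : ℕ →₀ ℕ} (hf : ∀ m ∈ f.support, ¬ t ∣ m) :
    combineHom t (expandF t f) = f := by
  rw [expandF, Finsupp.sum]
  rw [map_sum]
  have : ∀ m ∈ f.support,
      (combineHom t) (∑ v ∈ Finset.range (Nat.digits t (f m)).length,
        Finsupp.single (t ^ v * m) ((Nat.digits t (f m)).getD v 0))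
      = Finsupp.single m (f m) := by
    intro m hm
    rw [map_sum]
    have h1 : ∀ v ∈ Finset.range (Nat.digits t (f m)).length,
        (combineHom t) (Finsupp.single (t ^ v * m) ((Nat.digits t (f m)).getD v 0))
        = Finsupp.single m ((Nat.digits t (f m)).getD v 0 * t ^ v) := by
      intro v _
      rw [combineHom_single, core_pow_mul ht (hf m hm), vv_pow_mul ht (hf m hm)]
    rw [Finset.sum_congr rfl h1]
    have h2 := map_sum (Finsupp.singleAddHom m)
      (fun v => (Nat.digits t (f m)).getD v 0 * t ^ v) (Finset.range (Nat.digits t (f m)).length)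
    simp only [Finsupp.singleAddHom_apply] at h2
    rw [← h2, sum_getD_eq_ofDigits, Nat.ofDigits_digits]
  rw [Finset.sum_congr rfl this]
  exact Finsupp.sum_single f

lemma expand_apply {t : ℕ} (ht : 2 ≤ t) {f : ℕ →₀ ℕ} (hf : ∀ m ∈ f.support, ¬ t ∣ m) (a : ℕ) :
    expandF t f a = (Nat.digits t (f (core t a))).getD (vv t a) 0 := by
  classical
  rw [expandF, Finsupp.sum, sum_apply']
  have key : ∀ m ∈ f.support,
      (∑ v ∈ Finset.range (Nat.digits t (f m)).length,
        Finsupp.single (t ^ v * m) ((Nat.digits t (f m)).getD v 0)) a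
      = if m = core t a then (Nat.digits t (f m)).getD (vv t a) 0 else 0 := by
    intro m hm
    rw [sum_apply']
    have : ∀ v ∈ Finset.range (Nat.digits t (f m)).length,
        (Finsupp.single (t ^ v * m) ((Nat.digits t (f m)).getD v 0)) a
        = if m = core t a then (if v = vv t a then (Nat.digits t (f m)).getD v 0 else 0) else 0 := by
      intro v _
      rw [Finsupp.single_apply]
      by_cases h : t ^ v * m = a
      · rw [if_pos h]
        obtain ⟨hv, hmc⟩ := (pow_mul_eq_iff ht (hf m hm) v).mp h
        rw [if_pos hmc, if_pos hv]
      · rw [if_neg h]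
        by_cases h1 : m = core t a
        · rw [if_pos h1]
          by_cases h2 : v = vv t a
          · exfalso; exact h ((pow_mul_eq_iff ht (hf m hm) v).mpr ⟨h2, h1⟩)
          · rw [if_neg h2]
        · rw [if_neg h1]
    rw [Finset.sum_congr rfl this]
    by_cases h1 : m = core t a
    · simp only [if_pos h1]
      rw [Finset.sum_ite_eq' (Finset.range (Nat.digits t (f m)).length) (vv t a)]
      by_cases h2 : vv t a ∈ Finset.range (Nat.digits t (f m)).length
      · rw [if_pos h2]
      · rw [if_neg h2, List.getD_eq_default _ _ (by simpa using h2)]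
    · simp only [if_neg h1, Finset.sum_const_zero]
  rw [Finset.sum_congr rfl key, Finset.sum_ite_eq' f.support (core t a)]
  by_cases h : core t a ∈ f.support
  · rw [if_pos h]
  · rw [if_neg h, Finsupp.notMem_support_iff.mp h]
    simp

lemma expand_lt {t : ℕ} (ht : 2 ≤ t) {f : ℕ →₀ ℕ} (hf : ∀ m ∈ f.support, ¬ t ∣ m) (a : ℕ) :
    expandF t f a < t := by
  rw [expand_apply ht hf a]
  exact getD_digits_lt ht _ _

lemma expand_zero_apply {t : ℕ} (ht : 2 ≤ t) {f : ℕ →₀ ℕ} (hf : ∀ m ∈ f.support, ¬ t ∣ m) :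
    expandF t f 0 = 0 := by
  rw [expand_apply ht hf 0]
  have : f (core t 0) = 0 := by
    have : core t 0 = 0 := by simp [core]
    rw [this]
    by_contra h
    exact hf 0 (Finsupp.mem_support_iff.mpr h) (dvd_zero t)
  rw [this]
  simp


lemma pow_mul_left_injective {t m : ℕ} (ht : 2 ≤ t) (hm : ¬ t ∣ m) :
    Function.Injective (fun v => t ^ v * m) := by
  intro v w h
  simp only at h
  have := (pow_mul_eq_iff ht hm v).mp h
  rw [vv_pow_mul ht hm w] at this
  exact this.1

lemma combine_apply {t : ℕ} (ht : 2 ≤ t) {g : ℕ →₀ ℕ} {m : ℕ} (hm : ¬ t ∣ m)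
    (N : ℕ) (hN : ∀ v, N ≤ v → g (t ^ v * m) = 0) :
    combineHom t g m = ∑ v ∈ Finset.range N, g (t ^ v * m) * t ^ v := by
  classical
  rw [combineHom_apply, Finsupp.sum, sum_apply']
  have hterm : ∀ a, (Finsupp.single (core t a) (g a * t ^ vv t a)) m
      = if core t a = m then g a * t ^ vv t a else 0 := fun a => Finsupp.single_apply
  set F : ℕ → ℕ := fun a => if core t a = m then g a * t ^ vv t a else 0 with hF
  rw [Finset.sum_congr rfl fun a _ => hterm a]
  set S : Finset ℕ := (Finset.range N).image (fun v => t ^ v * m) with hS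
  have h1 : ∑ a ∈ g.support, F a = ∑ a ∈ g.support ∪ S, F a := by
    refine Finset.sum_subset (Finset.subset_union_left : g.support ⊆ g.support ∪ S) ?_
    intro a _ ha
    have : g a = 0 := Finsupp.notMem_support_iff.mp ha
    simp [hF, this]
  have h2 : ∑ a ∈ S, F a = ∑ a ∈ g.support ∪ S, F a := by
    refine Finset.sum_subset (Finset.subset_union_right : S ⊆ g.support ∪ S) ?_
    intro a ha' ha
    simp only [hF]
    rw [if_neg ?_]
    intro hc
    have haeq : t ^ vv t a * m = a := by rw [← hc]; exact core_mul t a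
    have hga : g a ≠ 0 := Finsupp.mem_support_iff.mp (by
      rcases Finset.mem_union.mp ha' with h | h
      · exact h
      · exact absurd h ha)
    have hvN : vv t a < N := by
      by_contra hge
      exact hga (by rw [← haeq]; exact hN _ (by omega))
    exact ha (Finset.mem_image.mpr ⟨vv t a, Finset.mem_range.mpr hvN, haeq⟩)
  rw [h1, ← h2, hS, Finset.sum_image (fun v _ w _ h => pow_mul_left_injective ht hm h)]
  refine Finset.sum_congr rfl fun v _ => ?_
  simp only [hF]
  rw [if_pos (core_pow_mul ht hm v), vv_pow_mul ht hm]

lemma base_unique {t : ℕ} : ∀ (N : ℕ) (c d : ℕ → ℕ), (∀ v, c v < t) → (∀ v, d v < t) →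
    (∑ v ∈ Finset.range N, c v * t ^ v = ∑ v ∈ Finset.range N, d v * t ^ v) →
    ∀ v < N, c v = d v := by
  intro N
  induction N with
  | zero => intro c d _ _ _ v hv; omega
  | succ N ih =>
    intro c d hc hd h v hv
    have ht0 : 0 < t := lt_of_le_of_lt (Nat.zero_le _) (hc 0)
    have expand : ∀ e : ℕ → ℕ, ∑ v ∈ Finset.range (N+1), e v * t ^ v
        = e 0 + (∑ v ∈ Finset.range N, e (v+1) * t ^ v) * t := by
      intro e
      rw [Finset.sum_range_succ']
      rw [Finset.sum_mul]
      simp only [pow_zero, mul_one, pow_succ]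
      rw [Nat.add_comm]
      congr 1
      exact Finset.sum_congr rfl fun v _ => by ring
    rw [expand c, expand d] at h
    have h0 : c 0 = d 0 := by
      have := congrArg (· % t) h
      simpa [Nat.add_mul_mod_self_right, Nat.mod_eq_of_lt (hc 0), Nat.mod_eq_of_lt (hd 0)] using this
    have h1 : ∑ w ∈ Finset.range N, c (w+1) * t ^ w = ∑ w ∈ Finset.range N, d (w+1) * t ^ w := by
      rw [h0] at h
      have := Nat.add_left_cancel h
      exact Nat.eq_of_mul_eq_mul_right ht0 this
    rcases Nat.eq_zero_or_pos v with rfl | hvpos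
    · exact h0
    · obtain ⟨w, rfl⟩ := Nat.exists_eq_add_of_lt hvpos
      have := ih (fun v => c (v+1)) (fun v => d (v+1)) (fun v => hc _) (fun v => hd _) h1 w (by omega)
      simpa [Nat.add_comm] using this

lemma combine_injective {t : ℕ} (ht : 2 ≤ t) {g1 g2 : ℕ →₀ ℕ}
    (hb1 : ∀ a, g1 a < t) (hb2 : ∀ a, g2 a < t)
    (h01 : g1 0 = 0) (h02 : g2 0 = 0)
    (h : combineHom t g1 = combineHom t g2) : g1 = g2 := by
  classical
  ext a
  rcases Nat.eq_zero_or_pos a with rfl | ha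
  · rw [h01, h02]
  have ha0 : a ≠ 0 := by omega
  set m := core t a with hmdef
  have hm : ¬ t ∣ m := not_dvd_core ht ha0
  set B := (g1.support ∪ g2.support).sup id with hB
  set N := max (B + 1) (vv t a + 1) with hNdef
  have hNbig : ∀ v, N ≤ v → ∀ g : ℕ →₀ ℕ, g.support ⊆ g1.support ∪ g2.support → g (t ^ v * m) = 0 := by
    intro v hv g hsub
    by_contra hne
    have hmem := hsub (Finsupp.mem_support_iff.mpr hne)
    have hle : t ^ v * m ≤ B := Finset.le_sup (f := id) hmem
    have h2v : v < 2 ^ v := Nat.lt_two_pow_self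
    have : 2 ^ v ≤ t ^ v := Nat.pow_le_pow_left (by omega) v
    have hm1 : 1 ≤ m := Nat.pos_of_ne_zero fun hm0 => hm (by rw [hm0]; exact dvd_zero t)
    have : t ^ v ≤ t ^ v * m := Nat.le_mul_of_pos_right _ hm1
    omega
  have e1 := combine_apply ht hm N (fun v hv => hNbig v hv g1 Finset.subset_union_left) (g := g1)
  have e2 := combine_apply ht hm N (fun v hv => hNbig v hv g2 Finset.subset_union_right) (g := g2)
  have hsums : ∑ v ∈ Finset.range N, g1 (t ^ v * m) * t ^ v
      = ∑ v ∈ Finset.range N, g2 (t ^ v * m) * t ^ v := by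
    rw [← e1, ← e2, h]
  have := base_unique N (fun v => g1 (t ^ v * m)) (fun v => g2 (t ^ v * m))
    (fun v => hb1 _) (fun v => hb2 _) hsums (vv t a) (by omega)
  rw [hmdef, core_mul t a] at this
  exact this


variable {n : ℕ}

/-- multiplicity function of a partition -/
noncomputable def toF (p : n.Partition) : ℕ →₀ ℕ := Multiset.toFinsupp p.parts

lemma toF_apply (p : n.Partition) (a : ℕ) : toF p a = p.parts.count a := rfl

lemma toF_zero (p : n.Partition) : toF p 0 = 0 := by
  rw [toF_apply, Multiset.count_eq_zero]
  intro h
  exact absurd (p.parts_pos h) (by omega)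

lemma mem_support_toF {p : n.Partition} {a : ℕ} : a ∈ (toF p).support ↔ a ∈ p.parts := by
  rw [toF, Multiset.toFinsupp_support, Multiset.mem_toFinset]

lemma wt_eq_sum (h : ℕ →₀ ℕ) : (Finsupp.toMultiset h).sum = wt h := by
  rw [Finsupp.sum_toMultiset, wt]
  exact Finsupp.sum_congr fun a _ => by rw [smul_eq_mul, mul_comm]

lemma wt_toF (p : n.Partition) : wt (toF p) = n := by
  rw [← wt_eq_sum, toF, Multiset.toFinsupp_toMultiset, p.parts_sum]

/-- build a partition from a multiplicity function -/
noncomputable def mkPart (h : ℕ →₀ ℕ) (h0 : h 0 = 0) (hs : wt h = n) : n.Partition where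
  parts := Finsupp.toMultiset h
  parts_pos := by
    intro i hi
    rw [Finsupp.mem_toMultiset] at hi
    rcases Nat.eq_zero_or_pos i with rfl | hpos
    · exact absurd h0 (Finsupp.mem_support_iff.mp hi)
    · exact hpos
  parts_sum := by rw [wt_eq_sum, hs]

lemma mkPart_parts (h : ℕ →₀ ℕ) (h0 : h 0 = 0) (hs : wt h = n) :
    (mkPart h h0 hs).parts = Finsupp.toMultiset h := rfl

lemma toF_injective : Function.Injective (toF (n := n)) := by
  intro p q h
  ext1
  have := congrArg Finsupp.toMultiset h
  rwa [toF, toF, Multiset.toFinsupp_toMultiset, Multiset.toFinsupp_toMultiset] at this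

lemma wt_expand {t : ℕ} (ht : 2 ≤ t) {f : ℕ →₀ ℕ} (hf : ∀ m ∈ f.support, ¬ t ∣ m) :
    wt (expandF t f) = wt f :=
  (wt_combine t (expandF t f)).symm.trans (congrArg wt (combine_expand ht hf))

/-- Step A : regular t-partitions inject into t-bounded partitions. -/
lemma stepA {t : ℕ} (ht : 2 ≤ t) (n : ℕ) :
    Fintype.card {p : n.Partition // ∀ a ∈ p.parts, ¬ t ∣ a}
      ≤ Fintype.card {p : n.Partition // ∀ a ∈ p.parts, p.parts.count a < t} := by
  classical
  have hreg : ∀ p : {p : n.Partition // ∀ a ∈ p.parts, ¬ t ∣ a},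
      ∀ m ∈ (toF p.1).support, ¬ t ∣ m := fun p m hm => p.2 m (mem_support_toF.mp hm)
  refine Fintype.card_le_of_injective (fun p =>
    ⟨mkPart (expandF t (toF p.1)) (expand_zero_apply ht (hreg p))
      ((wt_expand ht (hreg p)).trans (wt_toF p.1)), ?_⟩) ?_
  · intro a ha
    rw [mkPart_parts] at ha ⊢
    rw [Finsupp.count_toMultiset]
    exact expand_lt ht (hreg p) a
  · intro p q h
    have h1 : expandF t (toF p.1) = expandF t (toF q.1) := by
      have := congrArg (fun r : {p : n.Partition // _} => Multiset.toFinsupp r.1.parts) h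
      simpa [mkPart_parts, Finsupp.toMultiset_toFinsupp] using this
    have h2 : toF p.1 = toF q.1 := by
      rw [← combine_expand ht (hreg p), ← combine_expand ht (hreg q), h1]
    exact Subtype.ext (toF_injective h2)

/-- Step C : t-bounded partitions inject into regular t-partitions. -/
lemma stepC {t : ℕ} (ht : 2 ≤ t) (n : ℕ) :
    Fintype.card {p : n.Partition // ∀ a ∈ p.parts, p.parts.count a < t}
      ≤ Fintype.card {p : n.Partition // ∀ a ∈ p.parts, ¬ t ∣ a} := by
  classical
  have hbdd : ∀ p : {p : n.Partition // ∀ a ∈ p.parts, p.parts.count a < t},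
      ∀ a, toF p.1 a < t := by
    intro p a
    rw [toF_apply]
    by_cases h : a ∈ p.1.parts
    · exact p.2 a h
    · rw [Multiset.count_eq_zero_of_notMem h]; omega
  have h0 : ∀ p : {p : n.Partition // ∀ a ∈ p.parts, p.parts.count a < t},
      combineHom t (toF p.1) 0 = 0 := by
    intro p
    by_contra hne
    exact support_combine_regular ht (toF_zero p.1) 0 (Finsupp.mem_support_iff.mpr hne) (dvd_zero t)
  refine Fintype.card_le_of_injective (fun p =>
    ⟨mkPart (combineHom t (toF p.1)) (h0 p) ((wt_combine t (toF p.1)).trans (wt_toF p.1)), ?_⟩) ?_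
  · intro a ha
    rw [mkPart_parts, Finsupp.mem_toMultiset] at ha
    exact support_combine_regular ht (toF_zero p.1) a ha
  · intro p q h
    have h1 : combineHom t (toF p.1) = combineHom t (toF q.1) := by
      have := congrArg (fun r : {p : n.Partition // _} => Multiset.toFinsupp r.1.parts) h
      simpa [mkPart_parts, Finsupp.toMultiset_toFinsupp] using this
    exact Subtype.ext (toF_injective (combine_injective ht (hbdd p) (hbdd q)
      (toF_zero p.1) (toF_zero q.1) h1))

end RegAux

theorem regular_partition_count_monotone' (t : ℕ) (ht : 2 ≤ t) (n : ℕ) :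
    (Finset.univ.filter (fun p : n.Partition => ∀ a ∈ p.parts, ¬ t ∣ a)).card
      ≤ (Finset.univ.filter (fun p : n.Partition => ∀ a ∈ p.parts, ¬ (t+1) ∣ a)).card := by
  classical
  have hA := RegAux.stepA ht n
  have hC := RegAux.stepC (t := t + 1) (by omega) n
  have hB : Fintype.card {p : n.Partition // ∀ a ∈ p.parts, p.parts.count a < t}
      ≤ Fintype.card {p : n.Partition // ∀ a ∈ p.parts, p.parts.count a < t + 1} := by
    apply Fintype.card_le_of_injective (fun p => ⟨p.1, fun a ha => Nat.lt_succ_of_lt (p.2 a ha)⟩)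
    intro p q h
    exact Subtype.ext (Subtype.mk_eq_mk.mp h)
  have e1 : (Finset.univ.filter (fun p : n.Partition => ∀ a ∈ p.parts, ¬ t ∣ a)).card
      = Fintype.card {p : n.Partition // ∀ a ∈ p.parts, ¬ t ∣ a} := by
    rw [Fintype.card_subtype]
  have e2 : (Finset.univ.filter (fun p : n.Partition => ∀ a ∈ p.parts, ¬ (t+1) ∣ a)).card
      = Fintype.card {p : n.Partition // ∀ a ∈ p.parts, ¬ (t+1) ∣ a} := by
    rw [Fintype.card_subtype]
  omega

end Aux

/-- For every integer `t ≥ 2` and every `n ≥ 0`, the number of `(t+1)`-regular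
partitions of `n` is at least the number of `t`-regular partitions of `n`:
`b_{t+1}(n) ≥ b_t(n)`. -/
theorem regular_partition_count_monotone (t : ℕ) (ht : 2 ≤ t) (n : ℕ) :
    regularPartitionCount t n ≤ regularPartitionCount (t + 1) n := by
  unfold regularPartitionCount
  exact regular_partition_count_monotone' t ht n
end
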